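/- Let (X, d_X) be a finite pseudometric space and let m be an irreducible and aperiodic transition kernel on X, with cost C(x,x') = d_X(x,x'). Then there exist t₀ ∈ ℕ with t₀ ≥ 1 and ε ∈ (0,1], depending only on m, such that for all initial distributions ν₁, ν₂ ∈ 𝒫(X) and all k ∈ ℕ, d_WL^{(k)}((X, m, ν₁), (X, m, ν₂); C) ≤ (1−ε)^{⌊k/t₀⌋} · ‖C‖_∞. In particular, lim_{k→∞} d_WL^{(k)}((X, m, ν₁), (X, m, ν₂); C) = 0. -/

import Mathlib

open scoped BigOperators
open Filter Topology

/-- A probability vector on a finite type. -/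
def IsProb {X : Type*} [Fintype X] (ν : X → ℝ) : Prop :=
  (∀ x, 0 ≤ ν x) ∧ ∑ x, ν x = 1

/-- `μ` is a coupling of `α` and `β`. -/
def IsCoupling {X Y : Type*} [Fintype X] [Fintype Y]
    (μ : X × Y → ℝ) (α : X → ℝ) (β : Y → ℝ) : Prop :=
  (∀ z, 0 ≤ μ z) ∧ (∀ x, ∑ y, μ (x, y) = α x) ∧ (∀ y, ∑ x, μ (x, y) = β y)

/-- A finite Markov chain: a transition kernel together with an initial distribution. -/
structure MarkovChain (X : Type*) [Fintype X] where
  kernel : X → X → ℝ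
  init : X → ℝ
  kernel_prob : ∀ x, IsProb (kernel x)
  init_prob : IsProb init

/-- A Markovian coupling between two finite Markov chains.  `trans t` is the
transition coupling used from time `t` to time `t+1` (i.e. `m^{(t+1)}`). -/
structure MarkovCoupling {X Y : Type*} [Fintype X] [Fintype Y]
    (MX : MarkovChain X) (MY : MarkovChain Y) where
  init : X × Y → ℝ
  trans : ℕ → X × Y → X × Y → ℝ
  init_coupling : IsCoupling init MX.init MY.init
  trans_coupling : ∀ t xy, IsCoupling (trans t xy) (MX.kernel xy.1) (MY.kernel xy.2)

/-- Time-`t` law determined by an initial distribution and step kernels. -/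
noncomputable def lawAux {X Y : Type*} [Fintype X] [Fintype Y]
    (ν : X × Y → ℝ) (m : ℕ → X × Y → X × Y → ℝ) : ℕ → X × Y → ℝ
  | 0 => ν
  | t + 1 => fun z => ∑ w : X × Y, m t w z * lawAux ν m t w

/-- The time-`t` law of a Markovian coupling. -/
noncomputable def MarkovCoupling.law {X Y : Type*} [Fintype X] [Fintype Y]
    {MX : MarkovChain X} {MY : MarkovChain Y} (π : MarkovCoupling MX MY) :
    ℕ → X × Y → ℝ :=
  lawAux π.init π.trans

/-- `p` is a probability distribution on `ℕ`. -/
def IsProbNat (p : ℕ → ℝ) : Prop := (∀ t, 0 ≤ p t) ∧ HasSum p 1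

/-- The Optimal Transport Markov (OTM) distance associated to `p`. -/
noncomputable def dOTM {X Y : Type*} [Fintype X] [Fintype Y] (p : ℕ → ℝ)
    (MX : MarkovChain X) (MY : MarkovChain Y) (C : X × Y → ℝ) : ℝ :=
  ⨅ π : MarkovCoupling MX MY, ∑' t, p t * ∑ z : X × Y, C z * π.law t z

/-- The Dirac mass at `k` on `ℕ`. -/
noncomputable def diracN (k : ℕ) : ℕ → ℝ := fun t => if t = k then 1 else 0

/-- The depth-`k` WL distance, `d_WL^{(k)} = d_OTM^{δ_k}`. -/
noncomputable def dWL {X Y : Type*} [Fintype X] [Fintype Y] (k : ℕ)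
    (MX : MarkovChain X) (MY : MarkovChain Y) (C : X × Y → ℝ) : ℝ :=
  dOTM (diracN k) MX MY C

/-- `d` is a pseudometric on `X`. -/
def IsPseudometric {X : Type*} (d : X → X → ℝ) : Prop :=
  (∀ x y, 0 ≤ d x y) ∧ (∀ x, d x x = 0) ∧ (∀ x y, d x y = d y x) ∧
  (∀ x y z, d x z ≤ d x y + d y z)

/-- The `t`-step transition kernel. -/
noncomputable def kpow {X : Type*} [Fintype X] [DecidableEq X]
    (m : X → X → ℝ) : ℕ → X → X → ℝ
  | 0 => fun x x' => if x = x' then 1 else 0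
  | t + 1 => fun x x' => ∑ y, m x y * kpow m t y x'

/-- A transition kernel is irreducible if every state can reach every state in
some positive finite number of steps. -/
def KernelIrreducible {X : Type*} [Fintype X] [DecidableEq X] (m : X → X → ℝ) : Prop :=
  ∀ x x', ∃ t, 1 ≤ t ∧ 0 < kpow m t x x'

/-- A transition kernel is aperiodic if for every state the gcd of its return
times is `1` (i.e. every common divisor of the return times is `1`). -/
def KernelAperiodic {X : Type*} [Fintype X] [DecidableEq X] (m : X → X → ℝ) : Prop :=
  ∀ x, ∀ d : ℕ, (∀ t, 1 ≤ t → 0 < kpow m t x x → d ∣ t) → d = 1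

/-- `μ` is stationary for the transition kernel `m`. -/
def IsStationaryFor {X : Type*} [Fintype X] (m : X → X → ℝ) (μ : X → ℝ) : Prop :=
  ∀ x', ∑ x, m x x' * μ x = μ x'

/-- The entrywise supremum norm. -/
noncomputable def supNorm {Z : Type*} [Fintype Z] (C : Z → ℝ) : ℝ := ⨆ z, |C z|

section Helpers

private lemma mulmem_of_addclosed {S : Set ℕ} (hadd : ∀ a ∈ S, ∀ b ∈ S, a + b ∈ S) :
    ∀ k, 1 ≤ k → ∀ s ∈ S, k * s ∈ S := by
  intro k hk
  induction k with
  | zero => omega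
  | succ n ih =>
    intro s hs
    rcases Nat.eq_zero_or_pos n with h | h
    · simpa [h] using hs
    · have h1 := ih h s hs
      have h2 : n * s + s ∈ S := hadd _ h1 _ hs
      simpa [Nat.succ_mul] using h2

private lemma addclosed_cofinite {S : Set ℕ}
    (hS1 : ∀ n ∈ S, 1 ≤ n)
    (hadd : ∀ a ∈ S, ∀ b ∈ S, a + b ∈ S)
    (hgcd : ∀ d : ℕ, (∀ t ∈ S, d ∣ t) → d = 1) :
    ∃ N : ℕ, ∀ n, N ≤ n → n ∈ S := by
  obtain ⟨b, hb, hb1⟩ : ∃ b, b ∈ S ∧ b + 1 ∈ S := by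
    set T : AddSubgroup ℤ := AddSubgroup.closure ((fun n : ℕ => (n : ℤ)) '' S) with hT
    obtain ⟨a, ha⟩ := Int.subgroup_cyclic T
    have hmemT : ∀ s ∈ S, (s : ℤ) ∈ T := fun s hs =>
      AddSubgroup.subset_closure ⟨s, hs, rfl⟩
    have hdvd : ∀ s ∈ S, a.natAbs ∣ s := by
      intro s hs
      have hsT := hmemT s hs
      rw [ha, AddSubgroup.mem_closure_singleton] at hsT
      obtain ⟨n, hn⟩ := hsT
      have hd : a ∣ (s : ℤ) := ⟨n, by rw [← hn, smul_eq_mul, mul_comm]⟩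
      simpa using Int.natAbs_dvd_natAbs.mpr hd
    have hone : a.natAbs = 1 := hgcd _ hdvd
    have h1T : (1 : ℤ) ∈ T := by
      rcases Int.natAbs_eq a with h | h
      · have : a = 1 := by omega
        rw [ha, this]; exact AddSubgroup.subset_closure rfl
      · have : a = -1 := by omega
        rw [ha, this]
        exact neg_neg (1:ℤ) ▸ AddSubgroup.neg_mem _ (AddSubgroup.subset_closure rfl)
    set M : AddSubmonoid ℤ := AddSubmonoid.closure ((fun n : ℕ => (n : ℤ)) '' S) with hM
    have hdiff : ∀ z ∈ T, ∃ x ∈ M, ∃ y ∈ M, z = x - y := by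
      intro z hz
      rw [hT] at hz
      induction hz using AddSubgroup.closure_induction with
      | mem w hw => exact ⟨w, AddSubmonoid.subset_closure hw, 0, zero_mem _, by ring⟩
      | zero => exact ⟨0, zero_mem _, 0, zero_mem _, by ring⟩
      | add u v hu hv ihu ihv =>
        obtain ⟨x1, hx1, y1, hy1, h1⟩ := ihu
        obtain ⟨x2, hx2, y2, hy2, h2⟩ := ihv
        exact ⟨x1 + x2, add_mem hx1 hx2, y1 + y2, add_mem hy1 hy2, by rw [h1, h2]; ring⟩
      | neg u hu ihu =>
        obtain ⟨x1, hx1, y1, hy1, h1⟩ := ihu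
        exact ⟨y1, hy1, x1, hx1, by rw [h1]; ring⟩
    have hMS : ∀ z ∈ M, z = 0 ∨ ∃ n ∈ S, (n : ℤ) = z := by
      intro z hz
      rw [hM] at hz
      induction hz using AddSubmonoid.closure_induction with
      | mem w hw => obtain ⟨n, hn, rfl⟩ := hw; exact Or.inr ⟨n, hn, rfl⟩
      | zero => exact Or.inl rfl
      | add u v hu hv ihu ihv =>
        rcases ihu with rfl | ⟨n1, hn1, rfl⟩
        · simpa using ihv
        rcases ihv with rfl | ⟨n2, hn2, rfl⟩
        · exact Or.inr ⟨n1, hn1, by ring⟩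
        · exact Or.inr ⟨n1 + n2, hadd _ hn1 _ hn2, by push_cast; ring⟩
    obtain ⟨x, hx, y, hy, hxy⟩ := hdiff 1 h1T
    rcases hMS y hy with rfl | ⟨bb, hbb, rfl⟩
    · rcases hMS x hx with rfl | ⟨n, hn, hnx⟩
      · omega
      · have : n = 1 := by omega
        subst this
        exact ⟨1, hn, hadd _ hn _ hn⟩
    · rcases hMS x hx with rfl | ⟨n, hn, hnx⟩
      · omega
      · have : n = bb + 1 := by omega
        subst this
        exact ⟨bb, hbb, hn⟩
  have hbpos : 1 ≤ b := hS1 _ hb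
  refine ⟨b * b + b, fun n hn => ?_⟩
  set q := n / b with hq
  set r := n % b with hr
  have hqr : b * q + r = n := Nat.div_add_mod n b
  have hrb : r < b := Nat.mod_lt _ hbpos
  have hbq : b ≤ q := by
    rw [hq]
    exact (Nat.le_div_iff_mul_le hbpos).mpr (by omega)
  have hrq : r ≤ q := le_trans (le_of_lt hrb) hbq
  have h2 : (q - r) * b + r * b = q * b := by
    rw [← add_mul, Nat.sub_add_cancel hrq]
  have key : (q - r) * b + r * (b + 1) = n := by
    rw [mul_add, mul_one, ← add_assoc, h2, mul_comm q b]; omega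
  rcases Nat.eq_zero_or_pos r with h | h
  · have hmem : (q - r) * b ∈ S := mulmem_of_addclosed hadd _ (by omega) _ hb
    rw [← key]; simpa [h] using hmem
  · have h1 : (q - r) * b ∈ S := mulmem_of_addclosed hadd _ (by omega) _ hb
    have h2' : r * (b + 1) ∈ S := mulmem_of_addclosed hadd _ h _ hb1
    rw [← key]; exact hadd _ h1 _ h2'

section KP
variable {X : Type*} [Fintype X] [DecidableEq X] (m : X → X → ℝ)

private lemma kpow_nonneg (hm : ∀ x, IsProb (m x)) : ∀ t x x', 0 ≤ kpow m t x x' := by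
  intro t
  induction t with
  | zero => intro x x'; simp only [kpow]; split <;> norm_num
  | succ n ih =>
    intro x x'
    exact Finset.sum_nonneg fun y _ => mul_nonneg ((hm x).1 y) (ih y x')

private lemma kpow_row_sum (hm : ∀ x, IsProb (m x)) : ∀ t x, ∑ x', kpow m t x x' = 1 := by
  intro t
  induction t with
  | zero => intro x; simp [kpow]
  | succ n ih =>
    intro x
    simp only [kpow]
    rw [Finset.sum_comm]
    calc ∑ y, ∑ x', m x y * kpow m n y x' = ∑ y, m x y * ∑ x', kpow m n y x' := by
          simp [Finset.mul_sum]
      _ = 1 := by simp only [ih]; simpa using (hm x).2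

private lemma kpow_le_one (hm : ∀ x, IsProb (m x)) (t : ℕ) (x x' : X) :
    kpow m t x x' ≤ 1 := by
  calc kpow m t x x' ≤ ∑ y, kpow m t x y :=
        Finset.single_le_sum (fun y _ => kpow_nonneg m hm t x y) (Finset.mem_univ x')
    _ = 1 := kpow_row_sum m hm t x

private lemma kpow_add : ∀ s t x x', kpow m (s + t) x x' = ∑ y, kpow m s x y * kpow m t y x' := by
  intro s
  induction s with
  | zero =>
    intro t x x'
    simp [kpow, Finset.sum_ite_eq, zero_add]
  | succ n ih =>
    intro t x x'
    have h : n + 1 + t = (n + t) + 1 := by omega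
    rw [h]
    simp only [kpow]
    calc ∑ y, m x y * kpow m (n + t) y x'
        = ∑ y, m x y * ∑ w, kpow m n y w * kpow m t w x' := by simp only [ih]
      _ = ∑ y, ∑ w, m x y * (kpow m n y w * kpow m t w x') := by simp [Finset.mul_sum]
      _ = ∑ w, (∑ y, m x y * kpow m n y w) * kpow m t w x' := by
          rw [Finset.sum_comm]; congr 1; ext w; rw [Finset.sum_mul]; congr 1; ext y; ring

private lemma exists_primitive (hm : ∀ x, IsProb (m x))
    (hirr : KernelIrreducible m) (haper : KernelAperiodic m) :
    ∃ t₀ : ℕ, 1 ≤ t₀ ∧ ∀ x x', 0 < kpow m t₀ x x' := by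
  have hret : ∀ x : X, ∃ N, ∀ n, N ≤ n → 0 < kpow m n x x := by
    intro x
    set S : Set ℕ := {t | 1 ≤ t ∧ 0 < kpow m t x x} with hS
    have hadd : ∀ a ∈ S, ∀ b ∈ S, a + b ∈ S := by
      rintro a ⟨ha1, ha2⟩ b ⟨hb1, hb2⟩
      refine ⟨by omega, ?_⟩
      rw [kpow_add]
      exact lt_of_lt_of_le (mul_pos ha2 hb2)
        (Finset.single_le_sum
          (fun y _ => mul_nonneg (kpow_nonneg m hm a x y) (kpow_nonneg m hm b y x))
          (Finset.mem_univ x))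
    obtain ⟨N, hN⟩ := addclosed_cofinite (fun n hn => hn.1) hadd
      (fun d hd => haper x d (fun t h1 h2 => hd t ⟨h1, h2⟩))
    exact ⟨N, fun n hn => (hN n hn).2⟩
  choose N hN using hret
  have hpair : ∀ p : X × X, ∃ t, 1 ≤ t ∧ 0 < kpow m t p.1 p.2 := fun p => hirr p.1 p.2
  choose T hT1 hT2 using hpair
  refine ⟨max 1 (Finset.univ.sup fun p : X × X => N p.1 + T p), le_max_left _ _, ?_⟩
  intro x x'
  set t₀ := max 1 (Finset.univ.sup fun p : X × X => N p.1 + T p) with ht₀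
  have h1 : N x + T (x, x') ≤ t₀ :=
    le_max_of_le_right (Finset.le_sup (f := fun p : X × X => N p.1 + T p) (Finset.mem_univ (x, x')))
  have hs : t₀ = (t₀ - T (x, x')) + T (x, x') := (Nat.sub_add_cancel (by omega)).symm
  rw [hs, kpow_add]
  exact lt_of_lt_of_le
    (mul_pos (hN x _ (by omega)) (hT2 (x, x')))
    (Finset.single_le_sum
      (fun y _ => mul_nonneg (kpow_nonneg m hm _ x y) (kpow_nonneg m hm _ y x'))
      (Finset.mem_univ x))

/-- The "stick together when equal, move independently otherwise" coupling kernel. -/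
noncomputable def stickK : X × X → X × X → ℝ := fun w z =>
  if w.1 = w.2 then (if z.1 = z.2 then m w.1 z.1 else 0) else m w.1 z.1 * m w.2 z.2

/-- Probability of being apart after `t` further steps of the stick coupling. -/
noncomputable def gsep : ℕ → X × X → ℝ
  | 0 => fun w => if w.1 = w.2 then 0 else 1
  | t + 1 => fun w => ∑ z, stickK m w z * gsep t z

private lemma stickK_nonneg (hm : ∀ x, IsProb (m x)) (w z : X × X) : 0 ≤ stickK m w z := by
  unfold stickK
  split_ifs
  · exact (hm w.1).1 z.1
  · exact le_refl 0
  · exact mul_nonneg ((hm w.1).1 z.1) ((hm w.2).1 z.2)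

private lemma stickK_coupling (hm : ∀ x, IsProb (m x)) (w : X × X) :
    IsCoupling (stickK m w) (m w.1) (m w.2) := by
  obtain ⟨x, y⟩ := w
  refine ⟨stickK_nonneg m hm _, ?_, ?_⟩
  · intro x'
    by_cases hxy : x = y
    · simp only [stickK, hxy, if_pos]
      simp
    · simp only [stickK, if_neg hxy]
      rw [← Finset.mul_sum]
      simp [(hm y).2]
  · intro y'
    by_cases hxy : x = y
    · subst hxy
      simp only [stickK, if_pos rfl]
      simp
    · simp only [stickK, if_neg hxy]
      rw [← Finset.sum_mul, (hm x).2, one_mul]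

private lemma stickK_row_sum (hm : ∀ x, IsProb (m x)) (w : X × X) : ∑ z, stickK m w z = 1 := by
  rw [Fintype.sum_prod_type]
  calc ∑ a, ∑ b, stickK m w (a, b) = ∑ a, m w.1 a := by
        refine Finset.sum_congr rfl fun a _ => ?_
        exact (stickK_coupling m hm w).2.1 a
    _ = 1 := (hm w.1).2

private lemma gsep_nonneg (hm : ∀ x, IsProb (m x)) : ∀ t w, 0 ≤ gsep m t w := by
  intro t
  induction t with
  | zero => intro w; simp only [gsep]; split <;> norm_num
  | succ n ih =>
    intro w
    exact Finset.sum_nonneg fun z _ => mul_nonneg (stickK_nonneg m hm w z) (ih z)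

private lemma gsep_le_one (hm : ∀ x, IsProb (m x)) : ∀ t w, gsep m t w ≤ 1 := by
  intro t
  induction t with
  | zero => intro w; simp only [gsep]; split <;> norm_num
  | succ n ih =>
    intro w
    calc ∑ z, stickK m w z * gsep m n z ≤ ∑ z, stickK m w z * 1 :=
          Finset.sum_le_sum fun z _ =>
            mul_le_mul_of_nonneg_left (ih z) (stickK_nonneg m hm w z)
      _ = ∑ z, stickK m w z := by simp
      _ = 1 := stickK_row_sum m hm w

private lemma gsep_diag (hm : ∀ x, IsProb (m x)) : ∀ t x, gsep m t (x, x) = 0 := by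
  intro t
  induction t with
  | zero => intro x; simp [gsep]
  | succ n ih =>
    intro x
    show ∑ z, stickK m (x, x) z * gsep m n z = 0
    rw [Fintype.sum_prod_type]
    calc ∑ a, ∑ b, stickK m (x, x) (a, b) * gsep m n (a, b)
        = ∑ a, m x a * gsep m n (a, a) := by
          refine Finset.sum_congr rfl fun a _ => ?_
          simp only [stickK, if_pos rfl]
          rw [Finset.sum_eq_single a]
          · simp
          · intro b _ hb; simp [Ne.symm hb]
          · intro h; exact absurd (Finset.mem_univ a) h
      _ = 0 := by simp [ih]

private lemma gsep_le_gsep_zero (hm : ∀ x, IsProb (m x)) (t : ℕ) (w : X × X) :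
    gsep m t w ≤ gsep m 0 w := by
  by_cases h : w.1 = w.2
  · have hw : w = (w.1, w.1) := by rw [Prod.ext_iff]; exact ⟨rfl, h.symm⟩
    rw [hw, gsep_diag m hm, gsep_diag m hm]
  · calc gsep m t w ≤ 1 := gsep_le_one m hm t w
      _ = gsep m 0 w := by simp [gsep, h]

/-- Overlap functional `Φ_t(x,y) = ∑_z m^t_x(z) m^t_y(z)`. -/
noncomputable def phiOv (t : ℕ) (w : X × X) : ℝ :=
  ∑ z, kpow m t w.1 z * kpow m t w.2 z

private lemma phiOv_le_one (hm : ∀ x, IsProb (m x)) (t : ℕ) (w : X × X) :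
    phiOv m t w ≤ 1 := by
  calc phiOv m t w ≤ ∑ z, kpow m t w.1 z := by
        refine Finset.sum_le_sum fun z _ => ?_
        exact mul_le_of_le_one_right (kpow_nonneg m hm t w.1 z) (kpow_le_one m hm t w.2 z)
    _ = 1 := kpow_row_sum m hm t w.1

private lemma gsep_le_one_sub_phiOv (hm : ∀ x, IsProb (m x)) :
    ∀ t w, gsep m t w ≤ 1 - phiOv m t w := by
  intro t
  induction t with
  | zero =>
    rintro ⟨x, y⟩
    by_cases h : x = y
    · subst h
      simp only [gsep, if_true]
      linarith [phiOv_le_one m hm 0 (x, x)]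
    · have hphi : phiOv m 0 (x, y) = 0 := by
        simp only [phiOv, kpow]
        rw [Finset.sum_eq_single x]
        · simp [Ne.symm h]
        · intro b _ hb; simp [Ne.symm hb]
        · intro hh; exact absurd (Finset.mem_univ x) hh
      simp only [gsep, hphi]
      rw [if_neg h]
      norm_num
  | succ n ih =>
    rintro ⟨x, y⟩
    by_cases h : x = y
    · subst h
      rw [gsep_diag m hm]
      linarith [phiOv_le_one m hm (n+1) (x, x)]
    · have hstep : gsep m (n+1) (x, y) = ∑ z : X × X, (m x z.1 * m y z.2) * gsep m n z := by
        show ∑ z, stickK m (x, y) z * gsep m n z = _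
        refine Finset.sum_congr rfl fun z _ => ?_
        simp only [stickK, if_neg h]
      have hrec : phiOv m (n+1) (x, y) = ∑ z : X × X, (m x z.1 * m y z.2) * phiOv m n z := by
        simp only [phiOv, kpow]
        rw [Fintype.sum_prod_type]
        calc ∑ z, (∑ a, m x a * kpow m n a z) * (∑ b, m y b * kpow m n b z)
            = ∑ z, ∑ a, ∑ b, (m x a * kpow m n a z) * (m y b * kpow m n b z) := by
              refine Finset.sum_congr rfl fun z _ => ?_
              rw [Finset.sum_mul_sum]
          _ = ∑ a, ∑ z, ∑ b, (m x a * kpow m n a z) * (m y b * kpow m n b z) :=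
              Finset.sum_comm
          _ = ∑ a, ∑ b, ∑ z, (m x a * kpow m n a z) * (m y b * kpow m n b z) := by
              refine Finset.sum_congr rfl fun a _ => Finset.sum_comm
          _ = ∑ a, ∑ b, (m x a * m y b) * ∑ z, kpow m n a z * kpow m n b z := by
              refine Finset.sum_congr rfl fun a _ => Finset.sum_congr rfl fun b _ => ?_
              rw [Finset.mul_sum]
              refine Finset.sum_congr rfl fun z _ => ?_
              ring
      have hsum1 : ∑ z : X × X, m x z.1 * m y z.2 = 1 := by
        rw [Fintype.sum_prod_type]
        calc ∑ a, ∑ b, m x a * m y b = ∑ a, m x a * ∑ b, m y b := by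
              simp [Finset.mul_sum]
          _ = 1 := by rw [(hm y).2]; simpa using (hm x).2
      rw [hstep, hrec]
      calc ∑ z : X × X, (m x z.1 * m y z.2) * gsep m n z
          ≤ ∑ z : X × X, (m x z.1 * m y z.2) * (1 - phiOv m n z) :=
            Finset.sum_le_sum fun z _ =>
              mul_le_mul_of_nonneg_left (ih z)
                (mul_nonneg ((hm x).1 z.1) ((hm y).1 z.2))
        _ = ∑ z : X × X, (m x z.1 * m y z.2)
              - ∑ z : X × X, (m x z.1 * m y z.2) * phiOv m n z := by
            rw [← Finset.sum_sub_distrib]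
            refine Finset.sum_congr rfl fun z _ => ?_
            ring
        _ = 1 - ∑ z : X × X, (m x z.1 * m y z.2) * phiOv m n z := by rw [hsum1]

end KP

end Helpers

section MainHelpers

private lemma prod_coupling {X Y : Type*} [Fintype X] [Fintype Y]
    (α : X → ℝ) (β : Y → ℝ) (hα : IsProb α) (hβ : IsProb β) :
    IsCoupling (fun z : X × Y => α z.1 * β z.2) α β := by
  refine ⟨fun z => mul_nonneg (hα.1 z.1) (hβ.1 z.2), fun x => ?_, fun y => ?_⟩
  · show ∑ y : Y, α x * β y = α x
    rw [← Finset.mul_sum]; simp [hβ.2]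
  · show ∑ x : X, α x * β y = β y
    rw [← Finset.sum_mul, hα.2, one_mul]

private lemma lawAux_nonneg {X Y : Type*} [Fintype X] [Fintype Y]
    (ν : X × Y → ℝ) (mm : ℕ → X × Y → X × Y → ℝ)
    (hν : ∀ z, 0 ≤ ν z) (hmm : ∀ t w z, 0 ≤ mm t w z) :
    ∀ t z, 0 ≤ lawAux ν mm t z := by
  intro t
  induction t with
  | zero => exact hν
  | succ n ih =>
    intro z
    exact Finset.sum_nonneg fun w _ => mul_nonneg (hmm n w z) (ih w)

private lemma law_gsep_dual {X : Type*} [Fintype X] [DecidableEq X]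
    (m : X → X → ℝ) (ν : X × X → ℝ) :
    ∀ t s u, ∑ z, lawAux ν (fun _ => stickK m) (s + t) z * gsep m u z
      = ∑ w, lawAux ν (fun _ => stickK m) s w * gsep m (t + u) w := by
  intro t
  induction t with
  | zero => intro s u; simp
  | succ n ih =>
    intro s u
    have h1 : s + (n + 1) = (s + n) + 1 := by omega
    rw [h1]
    calc ∑ z, lawAux ν (fun _ => stickK m) ((s + n) + 1) z * gsep m u z
        = ∑ z, (∑ w, stickK m w z * lawAux ν (fun _ => stickK m) (s + n) w) * gsep m u z := by
          simp only [lawAux]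
      _ = ∑ z, ∑ w, (stickK m w z * lawAux ν (fun _ => stickK m) (s + n) w) * gsep m u z := by
          refine Finset.sum_congr rfl fun z _ => ?_
          rw [Finset.sum_mul]
      _ = ∑ w, ∑ z, (stickK m w z * lawAux ν (fun _ => stickK m) (s + n) w) * gsep m u z :=
          Finset.sum_comm
      _ = ∑ w, lawAux ν (fun _ => stickK m) (s + n) w * ∑ z, stickK m w z * gsep m u z := by
          refine Finset.sum_congr rfl fun w _ => ?_
          rw [Finset.mul_sum]
          refine Finset.sum_congr rfl fun z _ => ?_
          ring
      _ = ∑ w, lawAux ν (fun _ => stickK m) (s + n) w * gsep m (u + 1) w := by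
          refine Finset.sum_congr rfl fun w _ => ?_
          congr 1
      _ = ∑ w, lawAux ν (fun _ => stickK m) s w * gsep m (n + (u + 1)) w := ih s (u + 1)
      _ = ∑ w, lawAux ν (fun _ => stickK m) s w * gsep m ((n + 1) + u) w := by
          have h2 : n + (u + 1) = (n + 1) + u := by omega
          rw [h2]

private lemma dWL_bound {X : Type*} [Fintype X] [DecidableEq X] [Nonempty X]
    (dX : X → X → ℝ) (hdX : IsPseudometric dX)
    (m : X → X → ℝ) (hm : ∀ x, IsProb (m x))
    (t₀ : ℕ) (ε : ℝ) (hε0 : 0 < ε) (hε1 : ε ≤ 1)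
    (hover : ∀ w : X × X, w.1 ≠ w.2 → ε ≤ phiOv m t₀ w)
    (ν₁ ν₂ : X → ℝ) (hν₁ : IsProb ν₁) (hν₂ : IsProb ν₂) (k : ℕ) :
    0 ≤ dWL k (⟨m, ν₁, hm, hν₁⟩ : MarkovChain X) (⟨m, ν₂, hm, hν₂⟩ : MarkovChain X)
        (fun z : X × X => dX z.1 z.2) ∧
    dWL k (⟨m, ν₁, hm, hν₁⟩ : MarkovChain X) (⟨m, ν₂, hm, hν₂⟩ : MarkovChain X)
        (fun z : X × X => dX z.1 z.2)
      ≤ (1 - ε) ^ (k / t₀) * supNorm (fun z : X × X => dX z.1 z.2) := by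
  obtain ⟨z₀⟩ := (inferInstance : Nonempty X)
  set C : X × X → ℝ := fun z => dX z.1 z.2 with hC
  set MX : MarkovChain X := ⟨m, ν₁, hm, hν₁⟩ with hMX
  set MY : MarkovChain X := ⟨m, ν₂, hm, hν₂⟩ with hMY
  set ν : X × X → ℝ := fun z => ν₁ z.1 * ν₂ z.2 with hν
  set π : MarkovCoupling MX MY :=
    ⟨ν, fun _ => stickK m, prod_coupling ν₁ ν₂ hν₁ hν₂,
      fun t xy => stickK_coupling m hm xy⟩ with hπ
  set L : ℕ → X × X → ℝ := lawAux ν (fun _ => stickK m) with hL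
  have hπlaw : π.law = L := rfl
  have hLnn : ∀ t z, 0 ≤ L t z :=
    lawAux_nonneg ν _ (fun z => mul_nonneg (hν₁.1 _) (hν₂.1 _))
      (fun t w z => stickK_nonneg m hm w z)
  have hCnn : ∀ z, 0 ≤ C z := fun z => hdX.1 _ _
  have hCM : ∀ z, C z ≤ supNorm C := by
    intro z
    have h := le_ciSup (f := fun w : X × X => |C w|)
      (Set.Finite.bddAbove (Set.finite_range _)) z
    exact le_trans (le_abs_self _) h
  have hM0 : 0 ≤ supNorm C := by
    have h := le_ciSup (f := fun w : X × X => |C w|)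
      (Set.Finite.bddAbove (Set.finite_range _)) (z₀, z₀)
    exact le_trans (abs_nonneg (C (z₀, z₀))) h
  set A : ℕ → ℝ := fun t => ∑ z, L t z * gsep m 0 z with hA
  have hA0 : A 0 ≤ 1 := by
    calc ∑ z, L 0 z * gsep m 0 z ≤ ∑ z, L 0 z * 1 :=
          Finset.sum_le_sum fun z _ =>
            mul_le_mul_of_nonneg_left (gsep_le_one m hm 0 z) (hLnn 0 z)
      _ = ∑ z : X × X, ν₁ z.1 * ν₂ z.2 := by simp [hL, lawAux, hν]
      _ = ∑ a, ∑ b, ν₁ a * ν₂ b := Fintype.sum_prod_type _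
      _ = ∑ a, ν₁ a * ∑ b, ν₂ b := by simp [Finset.mul_sum]
      _ = 1 := by rw [hν₂.2]; simpa using hν₁.2
  have hdual : ∀ t s u, ∑ z, L (s + t) z * gsep m u z = ∑ w, L s w * gsep m (t + u) w :=
    law_gsep_dual m ν
  have hgkey : ∀ w, gsep m t₀ w ≤ (1 - ε) * gsep m 0 w := by
    intro w
    by_cases h : w.1 = w.2
    · have hw : w = (w.1, w.1) := by rw [Prod.ext_iff]; exact ⟨rfl, h.symm⟩
      rw [hw, gsep_diag m hm, gsep_diag m hm, mul_zero]
    · have h1 : gsep m t₀ w ≤ 1 - phiOv m t₀ w := gsep_le_one_sub_phiOv m hm t₀ w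
      have h2 : ε ≤ phiOv m t₀ w := hover w h
      have h3 : gsep m 0 w = 1 := by simp [gsep, h]
      rw [h3, mul_one]; linarith
  have hAstep : ∀ j, A (j * t₀) ≤ (1 - ε) ^ j := by
    intro j
    induction j with
    | zero => simpa using hA0
    | succ n ih =>
      have hnt : (n + 1) * t₀ = n * t₀ + t₀ := by ring
      calc A ((n + 1) * t₀) = ∑ z, L (n * t₀ + t₀) z * gsep m 0 z := by rw [hA]; simp [hnt]
        _ = ∑ w, L (n * t₀) w * gsep m (t₀ + 0) w := hdual t₀ (n * t₀) 0
        _ ≤ ∑ w, L (n * t₀) w * ((1 - ε) * gsep m 0 w) := by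
            refine Finset.sum_le_sum fun w _ => ?_
            refine mul_le_mul_of_nonneg_left ?_ (hLnn _ w)
            simpa using hgkey w
        _ = (1 - ε) * A (n * t₀) := by
            rw [hA, Finset.mul_sum]
            exact Finset.sum_congr rfl fun w _ => by ring
        _ ≤ (1 - ε) * (1 - ε) ^ n := mul_le_mul_of_nonneg_left ih (by linarith)
        _ = (1 - ε) ^ (n + 1) := by ring
  have hAk : A k ≤ (1 - ε) ^ (k / t₀) := by
    have hk : k = (k / t₀) * t₀ + k % t₀ := by
      rw [mul_comm]; exact (Nat.div_add_mod k t₀).symm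
    calc A k = ∑ z, L ((k / t₀) * t₀ + k % t₀) z * gsep m 0 z := by rw [hA]; simp [← hk]
      _ = ∑ w, L ((k / t₀) * t₀) w * gsep m (k % t₀ + 0) w := hdual (k % t₀) _ 0
      _ ≤ ∑ w, L ((k / t₀) * t₀) w * gsep m 0 w := by
          refine Finset.sum_le_sum fun w _ => ?_
          exact mul_le_mul_of_nonneg_left (gsep_le_gsep_zero m hm _ w) (hLnn _ w)
      _ = A ((k / t₀) * t₀) := rfl
      _ ≤ (1 - ε) ^ (k / t₀) := hAstep _
  have hcost : ∑ z, C z * L k z ≤ supNorm C * A k := by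
    calc ∑ z, C z * L k z ≤ ∑ z, supNorm C * (L k z * gsep m 0 z) := by
          refine Finset.sum_le_sum fun z _ => ?_
          by_cases h : z.1 = z.2
          · have hCz : C z = 0 := by
              show dX z.1 z.2 = 0
              rw [h]; exact hdX.2.1 z.2
            have hg : gsep m 0 z = 0 := by simp [gsep, h]
            rw [hCz, hg]; simp
          · have hg : gsep m 0 z = 1 := by simp [gsep, h]
            rw [hg, mul_one]
            exact mul_le_mul_of_nonneg_right (hCM z) (hLnn k z)
      _ = supNorm C * A k := by rw [hA, Finset.mul_sum]
  have htsum : ∀ σ : MarkovCoupling MX MY,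
      (∑' t, diracN k t * ∑ z, C z * σ.law t z) = ∑ z, C z * σ.law k z := by
    intro σ
    rw [tsum_eq_single k]
    · simp [diracN]
    · intro t ht; simp [diracN, ht]
  have hval : ∀ σ : MarkovCoupling MX MY, 0 ≤ ∑' t, diracN k t * ∑ z, C z * σ.law t z := by
    intro σ
    rw [htsum σ]
    refine Finset.sum_nonneg fun z _ => mul_nonneg (hCnn z) ?_
    exact lawAux_nonneg _ _ σ.init_coupling.1 (fun t w z' => (σ.trans_coupling t w).1 z') k z
  have hbdd : BddBelow (Set.range fun σ : MarkovCoupling MX MY =>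
      ∑' t, diracN k t * ∑ z, C z * σ.law t z) := by
    refine ⟨0, ?_⟩
    rintro v ⟨σ, rfl⟩
    exact hval σ
  have hdWL : dWL k MX MY C = ⨅ σ : MarkovCoupling MX MY,
      ∑' t, diracN k t * ∑ z, C z * σ.law t z := rfl
  constructor
  · rw [hdWL]
    haveI : Nonempty (MarkovCoupling MX MY) := ⟨π⟩
    exact le_ciInf hval
  · calc dWL k MX MY C ≤ ∑' t, diracN k t * ∑ z, C z * π.law t z := by
          rw [hdWL]; exact ciInf_le hbdd π
      _ = ∑ z, C z * L k z := by rw [htsum π, hπlaw]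
      _ ≤ supNorm C * A k := hcost
      _ ≤ supNorm C * (1 - ε) ^ (k / t₀) := mul_le_mul_of_nonneg_left hAk hM0
      _ = (1 - ε) ^ (k / t₀) * supNorm C := mul_comm _ _

end MainHelpers

/-- For a single irreducible aperiodic kernel `m` with pseudometric cost, the
depth-`k` WL distance between two copies of the chain with different initial
distributions decays as `(1-ε)^{⌊k/t₀⌋}·‖C‖_∞` for some `t₀ ≥ 1` and
`ε ∈ (0,1]` depending only on `m`; in particular it tends to `0`. -/
theorem stmt17 {X : Type*} [Fintype X] [DecidableEq X]
    (dX : X → X → ℝ) (hdX : IsPseudometric dX)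
    (m : X → X → ℝ) (hm : ∀ x, IsProb (m x))
    (hirr : KernelIrreducible m) (haper : KernelAperiodic m) :
    ∃ t₀ : ℕ, 1 ≤ t₀ ∧ ∃ ε : ℝ, 0 < ε ∧ ε ≤ 1 ∧
      ∀ (ν₁ ν₂ : X → ℝ) (hν₁ : IsProb ν₁) (hν₂ : IsProb ν₂),
        (∀ k : ℕ,
          dWL k (⟨m, ν₁, hm, hν₁⟩ : MarkovChain X)
              (⟨m, ν₂, hm, hν₂⟩ : MarkovChain X)
              (fun z : X × X => dX z.1 z.2) ≤
            (1 - ε) ^ (k / t₀) * supNorm (fun z : X × X => dX z.1 z.2)) ∧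
        Tendsto (fun k =>
            dWL k (⟨m, ν₁, hm, hν₁⟩ : MarkovChain X)
              (⟨m, ν₂, hm, hν₂⟩ : MarkovChain X)
              (fun z : X × X => dX z.1 z.2)) atTop (𝓝 0) := by
  rcases isEmpty_or_nonempty X with hX | hX
  · refine ⟨1, le_refl 1, 1, one_pos, le_refl 1, fun ν₁ ν₂ hν₁ hν₂ => ?_⟩
    exact absurd hν₁.2 (by simp)
  · haveI := hX
    obtain ⟨t₀, ht₀, hpos⟩ := exists_primitive m hm hirr haper
    obtain ⟨z₀⟩ := hX
    set δ : ℝ := Finset.univ.inf' Finset.univ_nonempty (fun x => kpow m t₀ x z₀) with hδ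
    have hδpos : 0 < δ := (Finset.lt_inf'_iff _).mpr fun x _ => hpos x z₀
    have hδ1 : δ ≤ 1 :=
      le_trans (Finset.inf'_le _ (Finset.mem_univ z₀)) (kpow_le_one m hm t₀ z₀ z₀)
    have hε0 : 0 < δ * δ := mul_pos hδpos hδpos
    have hε1 : δ * δ ≤ 1 := mul_le_one₀ hδ1 (le_of_lt hδpos) hδ1
    have hover : ∀ w : X × X, w.1 ≠ w.2 → δ * δ ≤ phiOv m t₀ w := by
      intro w _
      calc δ * δ ≤ kpow m t₀ w.1 z₀ * kpow m t₀ w.2 z₀ :=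
            mul_le_mul (Finset.inf'_le _ (Finset.mem_univ w.1))
              (Finset.inf'_le _ (Finset.mem_univ w.2)) (le_of_lt hδpos)
              (kpow_nonneg m hm t₀ w.1 z₀)
        _ ≤ phiOv m t₀ w :=
            Finset.single_le_sum
              (fun z _ => mul_nonneg (kpow_nonneg m hm t₀ w.1 z) (kpow_nonneg m hm t₀ w.2 z))
              (Finset.mem_univ z₀)
    refine ⟨t₀, ht₀, δ * δ, hε0, hε1, fun ν₁ ν₂ hν₁ hν₂ => ?_⟩
    have hb := fun k =>
      dWL_bound dX hdX m hm t₀ (δ * δ) hε0 hε1 hover ν₁ ν₂ hν₁ hν₂ k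
    refine ⟨fun k => (hb k).2, ?_⟩
    have hdiv : Tendsto (fun k : ℕ => k / t₀) atTop atTop := by
      refine Filter.tendsto_atTop_atTop.mpr fun N => ⟨N * t₀, fun n hn => ?_⟩
      exact (Nat.le_div_iff_mul_le (by omega)).mpr hn
    have h1 : Tendsto
        (fun k : ℕ => (1 - δ * δ) ^ (k / t₀) * supNorm (fun z : X × X => dX z.1 z.2))
        atTop (𝓝 0) := by
      have h2 := ((tendsto_pow_atTop_nhds_zero_of_lt_one (r := 1 - δ * δ) (by linarith) (by linarith)).comp
        hdiv).mul_const (supNorm (fun z : X × X => dX z.1 z.2))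
      simpa [Function.comp] using h2
    exact squeeze_zero (fun k => (hb k).1) (fun k => (hb k).2) h1
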